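/- Suppose that on a probability space: Z is a random vector in ℝ^{d_z}; V = (V₁,…,V_{d_b}) is a random vector each of whose real components V_k has an atomless (continuous) distribution; for each k = 1,…,d_b, h_k : ℝ^{d_z} × ℝ → ℝ is measurable and strictly increasing in its second argument and X_k = h_k(Z, V_k); B is a random vector in ℝ^{d_w}; and (B, V) is independent of Z. Let R_k = F_{X_k|Z}(X_k | Z) for k = 1,…,d_b, where F_{X_k|Z}(·|z) is a regular conditional distribution function of X_k given Z = z, and set R = (R₁,…,R_{d_b}). Then the pair (R, B) is independent of Z. -/

import Mathlib

open MeasureTheory ProbabilityTheory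

/-- `F` is a regular conditional distribution function of the real random variable `X` given
the random element `Z`: for each conditioning value `z`, `F z` is monotone and
right-continuous, `F · x` is measurable, and `fun ω => F (Z ω) x` is a version of the
conditional probability `P(X ≤ x | σ(Z))` for every `x`. -/
def IsRegCondCDF {Ω ζ : Type*} [MeasurableSpace Ω] [MeasurableSpace ζ]
    (μ : MeasureTheory.Measure Ω) (X : Ω → ℝ) (Z : Ω → ζ) (F : ζ → ℝ → ℝ) : Prop :=
  (∀ z, Monotone (F z)) ∧
  (∀ z x, ContinuousWithinAt (F z) (Set.Ici x) x) ∧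
  (∀ x, Measurable fun z => F z x) ∧
  (∀ x : ℝ, (fun ω => F (Z ω) x)
    =ᵐ[μ] μ[Set.indicator {ω | X ω ≤ x} (fun _ => (1 : ℝ))
      | MeasurableSpace.comap Z inferInstance])

open Filter Topology in
/-- Auxiliary: the conditional rank equals the CDF of the error evaluated at the error. -/
lemma aux_rank_eq_cdf
    {Ω : Type*} [MeasurableSpace Ω] (μ : Measure Ω) [IsProbabilityMeasure μ]
    {dz : ℕ}
    (Z : Ω → Fin dz → ℝ) (hZ : Measurable Z)
    (W : Ω → ℝ) (hW : Measurable W)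
    (h : (Fin dz → ℝ) → ℝ → ℝ)
    (hhmeas : Measurable fun p : (Fin dz → ℝ) × ℝ => h p.1 p.2)
    (hhmono : ∀ z, StrictMono (h z))
    (hindep : IndepFun W Z μ)
    (F : (Fin dz → ℝ) → ℝ → ℝ)
    (hF : IsRegCondCDF μ (fun ω => h (Z ω) (W ω)) Z F) :
    ∀ᵐ ω ∂μ, F (Z ω) (h (Z ω) (W ω)) = ((μ.map W) (Set.Iic (W ω))).toReal := by
  obtain ⟨hFmono, hFrc, hFmeas, hFcond⟩ := hF
  set ν := μ.map W with hν
  haveI : IsProbabilityMeasure ν := Measure.isProbabilityMeasure_map hW.aemeasurable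
  set G : (Fin dz → ℝ) → ℝ → ℝ := fun z x => (ν {v | h z v ≤ x}).toReal with hGdef
  have hXmeas : Measurable fun ω => h (Z ω) (W ω) := hhmeas.comp (hZ.prodMk hW)
  have hSmeas : ∀ x : ℝ, MeasurableSet {p : (Fin dz → ℝ) × ℝ | h p.1 p.2 ≤ x} := fun x =>
    measurableSet_le hhmeas measurable_const
  have hGmeas : ∀ x : ℝ, Measurable fun z => ν {v | h z v ≤ x} := fun x =>
    measurable_measure_prodMk_left (hSmeas x)
  have hGle : ∀ z x, G z x ≤ 1 := fun z x => by
    simpa using ENNReal.toReal_mono ENNReal.one_ne_top (prob_le_one (μ := ν))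
  have hmap : μ.map (fun ω => (Z ω, W ω)) = (μ.map Z).prod ν :=
    (indepFun_iff_map_prod_eq_prod_map_map hZ.aemeasurable hW.aemeasurable).mp hindep.symm
  -- Step 1 : `G (Z ·) x` is a version of the conditional probability.
  have step1 : ∀ x : ℝ, (fun ω => G (Z ω) x)
      =ᵐ[μ] μ[Set.indicator {ω | h (Z ω) (W ω) ≤ x} (fun _ => (1 : ℝ))
        | MeasurableSpace.comap Z inferInstance] := by
    intro x
    have ht : MeasurableSet {ω | h (Z ω) (W ω) ≤ x} := measurableSet_le hXmeas measurable_const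
    refine ae_eq_condExp_of_forall_setIntegral_eq hZ.comap_le ?_ ?_ ?_ ?_
    · exact (integrable_const (1 : ℝ)).indicator ht
    · intro s _ _
      refine (Integrable.mono' (integrable_const (1 : ℝ))
        (((ENNReal.measurable_toReal.comp (hGmeas x)).comp hZ).aestronglyMeasurable)
        (ae_of_all _ fun ω => ?_)).integrableOn
      simp only [Function.comp_apply, Real.norm_eq_abs,
        abs_of_nonneg ENNReal.toReal_nonneg]
      exact hGle _ x
    · rintro s ⟨A, hA, rfl⟩ -
      have hC : MeasurableSet ({p : (Fin dz → ℝ) × ℝ | h p.1 p.2 ≤ x} ∩ A ×ˢ Set.univ) :=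
        (hSmeas x).inter (hA.prod MeasurableSet.univ)
      have key : ∫⁻ z in A, ν {v | h z v ≤ x} ∂(μ.map Z)
          = μ ({ω | h (Z ω) (W ω) ≤ x} ∩ Z ⁻¹' A) := by
        have h1 : {ω | h (Z ω) (W ω) ≤ x} ∩ Z ⁻¹' A
            = (fun ω => (Z ω, W ω)) ⁻¹'
              ({p : (Fin dz → ℝ) × ℝ | h p.1 p.2 ≤ x} ∩ A ×ˢ Set.univ) := by
          ext ω
          simp [Set.mem_prod, and_comm]
        rw [h1, ← Measure.map_apply (hZ.prodMk hW) hC, hmap, Measure.prod_apply hC,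
          ← lintegral_indicator hA]
        congr 1
        funext z
        by_cases hz : z ∈ A
        · rw [Set.indicator_of_mem hz]
          congr 1
          ext v
          simp [hz]
        · rw [Set.indicator_of_notMem hz]
          have : (Prod.mk z ⁻¹' ({p : (Fin dz → ℝ) × ℝ | h p.1 p.2 ≤ x} ∩ A ×ˢ Set.univ))
              = (∅ : Set ℝ) := by
            ext v; simp [hz]
        
          rw [this, measure_empty]
      calc ∫ ω in Z ⁻¹' A, G (Z ω) x ∂μ
          = ∫ z in A, G z x ∂(μ.map Z) :=
            (setIntegral_map hA
              ((ENNReal.measurable_toReal.comp (hGmeas x)).aestronglyMeasurable)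
              hZ.aemeasurable).symm
        _ = (∫⁻ z in A, ν {v | h z v ≤ x} ∂(μ.map Z)).toReal :=
            integral_toReal ((hGmeas x).aemeasurable.restrict)
              (ae_of_all _ fun z => measure_lt_top ν _)
        _ = (μ ({ω | h (Z ω) (W ω) ≤ x} ∩ Z ⁻¹' A)).toReal := by rw [key]
        _ = ∫ ω in Z ⁻¹' A,
              Set.indicator {ω | h (Z ω) (W ω) ≤ x} (fun _ => (1 : ℝ)) ω ∂μ := by
            rw [integral_indicator_const (1 : ℝ) ht, measureReal_def, Measure.restrict_apply ht,
              smul_eq_mul, mul_one]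
    · exact StronglyMeasurable.aestronglyMeasurable
        (Measurable.stronglyMeasurable
          ((ENNReal.measurable_toReal.comp (hGmeas x)).comp (comap_measurable Z)))
  -- Step 2 : `F (Z ·)` and `G (Z ·)` agree a.e. at every rational.
  have step2 : ∀ᵐ ω ∂μ, ∀ q : ℚ, F (Z ω) q = G (Z ω) q := by
    rw [ae_all_iff]
    intro q
    filter_upwards [hFcond q, step1 q] with ω h1 h2
    exact h1.trans h2.symm
  -- Step 3 : conclude pointwise.
  filter_upwards [step2] with ω hω
  set z := Z ω with hz
  set x := h z (W ω) with hx
  obtain ⟨q, hq1, hq2⟩ : ∃ q : ℕ → ℚ, (∀ n, x < (q n : ℝ)) ∧ (∀ n, (q n : ℝ) < x + (1/2)^n) := by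
    have : ∀ n : ℕ, ∃ q : ℚ, x < (q : ℝ) ∧ (q : ℝ) < x + (1/2)^n := fun n =>
      exists_rat_btwn (lt_add_of_pos_right x (by positivity))
    choose q hq1 hq2 using this
    exact ⟨q, hq1, hq2⟩
  have hpow : Tendsto (fun n : ℕ => x + (1/2 : ℝ)^n) atTop (𝓝 x) := by
    have := tendsto_pow_atTop_nhds_zero_of_lt_one
      (by norm_num : (0:ℝ) ≤ 1/2) (by norm_num : (1/2:ℝ) < 1)
    simpa using (tendsto_const_nhds (x := x)).add this
  have hqx : Tendsto (fun n => (q n : ℝ)) atTop (𝓝 x) :=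
    tendsto_of_tendsto_of_tendsto_of_le_of_le tendsto_const_nhds hpow
      (fun n => (hq1 n).le) (fun n => (hq2 n).le)
  have hqF : Tendsto (fun n => F z (q n)) atTop (𝓝 (F z x)) :=
    (hFrc z x).tendsto.comp
      (tendsto_nhdsWithin_of_tendsto_nhds_of_eventually_within _ hqx
        (Eventually.of_forall fun n => (hq1 n).le))
  -- convergence of `G z (q n)` to `G z x` via squeezing with an antitone family
  have hGq : Tendsto (fun n => G z (q n)) atTop (𝓝 (G z x)) := by
    set T : ℕ → Set ℝ := fun n => {v | h z v ≤ x + (1/2)^n} with hT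
    have hTanti : Antitone T := by
      intro m n hmn v hv
      simp only [hT, Set.mem_setOf_eq] at hv ⊢
      exact hv.trans (add_le_add_right
        (pow_le_pow_of_le_one (a := (1/2 : ℝ)) (by norm_num) (by norm_num) hmn) x)
    have hTinter : (⋂ n, T n) = {v | h z v ≤ x} := by
      ext v
      simp only [Set.mem_iInter, Set.mem_setOf_eq, hT]
      constructor
      · intro hv
        exact ge_of_tendsto hpow (Eventually.of_forall hv)
      · intro hv n
        exact hv.trans (le_add_of_nonneg_right (by positivity))
    have hTmeas : ∀ n, NullMeasurableSet (T n) ν := fun n =>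
      (measurableSet_le (hhmeas.comp (measurable_prodMk_left)) measurable_const).nullMeasurableSet
    have hTtend : Tendsto (fun n => ν (T n)) atTop (𝓝 (ν {v | h z v ≤ x})) := by
      have := tendsto_measure_iInter_atTop (μ := ν) hTmeas hTanti ⟨0, measure_ne_top ν _⟩
      rwa [hTinter] at this
    have hTtendR : Tendsto (fun n => (ν (T n)).toReal) atTop (𝓝 (G z x)) :=
      (ENNReal.tendsto_toReal (measure_ne_top ν _)).comp hTtend
    refine tendsto_of_tendsto_of_tendsto_of_le_of_le tendsto_const_nhds hTtendR
      (fun n => ?_) (fun n => ?_)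
    · exact ENNReal.toReal_mono (measure_ne_top ν _)
        (measure_mono fun v hv => le_trans hv (hq1 n).le)
    · exact ENNReal.toReal_mono (measure_ne_top ν _)
        (measure_mono fun v hv => le_trans hv (hq2 n).le)
  have hFG : F z x = G z x := by
    refine tendsto_nhds_unique ?_ hGq
    have : (fun n => F z (q n)) = fun n => G z (q n) := funext fun n => hω (q n)
    rwa [this] at hqF
  rw [hFG]
  show (ν {v | h z v ≤ h z (W ω)}).toReal = (ν (Set.Iic (W ω))).toReal
  rw [show {v | h z v ≤ h z (W ω)} = Set.Iic (W ω) from Set.ext fun v => (hhmono z).le_iff_le]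

/-- Proposition 1, first part. Suppose `X_k = h_k(Z, V_k)` with each `h_k`
strictly increasing in its second argument, each `V_k` atomless, and `(B, V)` independent of
`Z`. Let `R_k = F_{X_k|Z}(X_k | Z)` be the conditional ranks. Then the pair `(R, B)` is
independent of `Z`. -/
theorem rank_and_coefficients_indep_of_instrument
    {Ω : Type*} [MeasurableSpace Ω] (μ : Measure Ω) [IsProbabilityMeasure μ]
    {dz db dw : ℕ}
    (Z : Ω → Fin dz → ℝ) (hZ : Measurable Z)
    (V : Ω → Fin db → ℝ) (hV : Measurable V)
    (hVatomless : ∀ (k : Fin db) (v : ℝ), μ {ω | V ω k = v} = 0)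
    (h : Fin db → (Fin dz → ℝ) → ℝ → ℝ)
    (hhmeas : ∀ k, Measurable fun p : (Fin dz → ℝ) × ℝ => h k p.1 p.2)
    (hhmono : ∀ k z, StrictMono (h k z))
    (X : Fin db → Ω → ℝ)
    (hX : ∀ k, X k = fun ω => h k (Z ω) (V ω k))
    (B : Ω → Fin dw → ℝ) (hB : Measurable B)
    (hindep : IndepFun (fun ω => (B ω, V ω)) Z μ)
    (F : Fin db → (Fin dz → ℝ) → ℝ → ℝ)
    (hF : ∀ k, IsRegCondCDF μ (X k) Z (F k))
    (R : Ω → Fin db → ℝ)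
    (hR : R = fun ω k => F k (Z ω) (X k ω)) :
    IndepFun (fun ω => (R ω, B ω)) Z μ := by
  set c : Fin db → ℝ → ℝ := fun k v => ((μ.map fun ω => V ω k) (Set.Iic v)).toReal with hc
  have hcmono : ∀ k, Monotone (c k) := fun k a b hab =>
    ENNReal.toReal_mono (measure_ne_top _ _) (measure_mono (Set.Iic_subset_Iic.mpr hab))
  have hcmeas : ∀ k, Measurable (c k) := fun k => (hcmono k).measurable
  set f : (Fin dw → ℝ) × (Fin db → ℝ) → (Fin db → ℝ) × (Fin dw → ℝ) :=
    fun p => (fun k => c k (p.2 k), p.1) with hfdef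
  have hfmeas : Measurable f :=
    (measurable_pi_lambda _ fun k =>
      (hcmeas k).comp ((measurable_pi_apply k).comp measurable_snd)).prodMk measurable_fst
  have hindep2 : IndepFun (f ∘ fun ω => (B ω, V ω)) (id ∘ Z) μ :=
    hindep.comp hfmeas measurable_id
  have hk : ∀ k : Fin db, ∀ᵐ ω ∂μ, F k (Z ω) (h k (Z ω) (V ω k)) = c k (V ω k) := by
    intro k
    have hWk : Measurable fun ω => V ω k := (measurable_pi_apply k).comp hV
    have hik : IndepFun (fun ω => V ω k) Z μ :=
      hindep.comp ((measurable_pi_apply k).comp measurable_snd) measurable_id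
    have hFk : IsRegCondCDF μ (fun ω => h k (Z ω) (V ω k)) Z (F k) := by
      have := hF k
      rwa [hX k] at this
    exact aux_rank_eq_cdf μ Z hZ (fun ω => V ω k) hWk (h k) (hhmeas k) (hhmono k) hik (F k) hFk
  have hae : (f ∘ fun ω => (B ω, V ω)) =ᵐ[μ] fun ω => (R ω, B ω) := by
    filter_upwards [ae_all_iff.mpr hk] with ω hω
    have hRω : R ω = fun k => c k (V ω k) := by
      funext k
      rw [hR]
      simp only
      rw [hX k]
      exact hω k
    simp only [Function.comp_apply, hfdef]
    rw [hRω]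
  exact hindep2.congr hae (ae_of_all _ fun ω => rfl)
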